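/- arXiv:2508.03382 — 2 statements merged into one kernel-verified Lean document; each statement's English description precedes it below -/
import Mathlib

section
/- Let U ⊆ ℝ³ be open and w : ℝ³ → ℍ be twice continuously differentiable and left-monogenic on U (Dw = 0) with harmonic components. Then the function g = wD̄ (the conjugate Cauchy–Riemann operator applied on the right, gD̄ meaning ∂w/∂x − (∂w/∂y)·i − (∂w/∂z)·j) is both left-monogenic and right-monogenic on U: D(wD̄) = 0 and (wD̄)D = 0 on U. -/
open Quaternion MeasureTheory Metric intervalIntegral

noncomputable section

/-- `ℝ³`, identified with the reduced quaternions via `(x,y,z) ↦ x + y·i + z·j`. -/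
abbrev V3 : Type := EuclideanSpace ℝ (Fin 3)

/-- The standard basis vectors of `ℝ³`. -/
noncomputable def ev (m : Fin 3) : V3 := EuclideanSpace.single m 1

/-- Partial derivative of `f` in the `m`-th coordinate direction
(`m = 0,1,2` corresponding to `x,y,z`). -/
noncomputable def pd (m : Fin 3) {E : Type*} [NormedAddCommGroup E] [NormedSpace ℝ E]
    (f : V3 → E) (p : V3) : E := fderiv ℝ f p (ev m)

/-- The quaternion unit `i`. -/
def qi : ℍ[ℝ] := ⟨0, 1, 0, 0⟩

/-- The quaternion unit `j`. -/
def qj : ℍ[ℝ] := ⟨0, 0, 1, 0⟩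

/-- The reduced quaternion `x + y·i + z·j` associated to the point `(x,y,z) ∈ ℝ³`. -/
def toQ (p : V3) : ℍ[ℝ] := ⟨p 0, p 1, p 2, 0⟩

/-- Generalized Cauchy–Riemann operator: `Df = ∂f/∂x + i·(∂f/∂y) + j·(∂f/∂z)`
(quaternion multiplication on the left). -/
noncomputable def Dop (f : V3 → ℍ[ℝ]) (p : V3) : ℍ[ℝ] :=
  pd 0 f p + qi * pd 1 f p + qj * pd 2 f p

/-- Right Cauchy–Riemann operator: `fD = ∂f/∂x + (∂f/∂y)·i + (∂f/∂z)·j`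
(quaternion multiplication on the right). -/
noncomputable def Dright (f : V3 → ℍ[ℝ]) (p : V3) : ℍ[ℝ] :=
  pd 0 f p + pd 1 f p * qi + pd 2 f p * qj

/-- Right conjugate Cauchy–Riemann operator: `fD̄ = ∂f/∂x − (∂f/∂y)·i − (∂f/∂z)·j`
(quaternion multiplication on the right). -/
noncomputable def Dbarright (f : V3 → ℍ[ℝ]) (p : V3) : ℍ[ℝ] :=
  pd 0 f p - pd 1 f p * qi - pd 2 f p * qj

/-- Componentwise Laplacian `Δf = ∂²f/∂x² + ∂²f/∂y² + ∂²f/∂z²`. -/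
noncomputable def lap {E : Type*} [NormedAddCommGroup E] [NormedSpace ℝ E]
    (f : V3 → E) (p : V3) : E :=
  pd 0 (pd 0 f) p + pd 1 (pd 1 f) p + pd 2 (pd 2 f) p

section Helpers

lemma pd_comp_clm {E F : Type*} [NormedAddCommGroup E] [NormedSpace ℝ E]
    [NormedAddCommGroup F] [NormedSpace ℝ F] (L : E →L[ℝ] F) {f : V3 → E} {p : V3}
    (hf : DifferentiableAt ℝ f p) (m : Fin 3) :
    pd m (fun q => L (f q)) p = L (pd m f p) := by
  unfold pd
  rw [show (fun q => L (f q)) = (⇑L ∘ f) from rfl,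
    (L.hasFDerivAt.comp p hf.hasFDerivAt).fderiv]
  rfl

lemma pd_add {E : Type*} [NormedAddCommGroup E] [NormedSpace ℝ E] {f g : V3 → E} {p : V3}
    (hf : DifferentiableAt ℝ f p) (hg : DifferentiableAt ℝ g p) (m : Fin 3) :
    pd m (fun q => f q + g q) p = pd m f p + pd m g p := by
  unfold pd
  rw [fderiv_fun_add hf hg]
  rfl

lemma pd_sub {E : Type*} [NormedAddCommGroup E] [NormedSpace ℝ E] {f g : V3 → E} {p : V3}
    (hf : DifferentiableAt ℝ f p) (hg : DifferentiableAt ℝ g p) (m : Fin 3) :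
    pd m (fun q => f q - g q) p = pd m f p - pd m g p := by
  unfold pd
  rw [fderiv_fun_sub hf hg]
  rfl

lemma pd_mul_const {f : V3 → ℍ[ℝ]} {p : V3} (hf : DifferentiableAt ℝ f p)
    (c : ℍ[ℝ]) (m : Fin 3) :
    pd m (fun q => f q * c) p = pd m f p * c := by
  unfold pd
  rw [fderiv_mul_const' hf c]
  simp [smul_eq_mul]

lemma pd_const_mul {f : V3 → ℍ[ℝ]} {p : V3} (hf : DifferentiableAt ℝ f p)
    (c : ℍ[ℝ]) (m : Fin 3) :
    pd m (fun q => c * f q) p = c * pd m f p := by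
  unfold pd
  rw [(hf.hasFDerivAt.const_mul c).fderiv]
  simp [smul_eq_mul]

lemma qi_mul_qi : qi * qi = -1 := by ext <;> simp [qi] <;> erw [QuaternionAlgebra.mk_mul_mk] <;> norm_num
lemma qj_mul_qj : qj * qj = -1 := by ext <;> simp [qj] <;> erw [QuaternionAlgebra.mk_mul_mk] <;> norm_num
lemma qij_anticomm : qj * qi + qi * qj = 0 := by ext <;> simp [qi, qj] <;> erw [QuaternionAlgebra.mk_mul_mk, QuaternionAlgebra.mk_mul_mk] <;> norm_num

end Helpers

/-- If `w` is twice continuously differentiable, left-monogenic and has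
harmonic components on an open set `U ⊆ ℝ³`, then `g = wD̄` is both left-monogenic and
right-monogenic on `U`: `D(wD̄) = 0` and `(wD̄)D = 0` on `U`. -/
theorem right_conjugate_derivative_is_two_sided_monogenic
    (U : Set V3) (hU : IsOpen U) (w : V3 → ℍ[ℝ]) (hw : ContDiffOn ℝ 2 w U)
    (hmono : ∀ p ∈ U, Dop w p = 0) (hharm : ∀ p ∈ U, lap w p = 0) :
    ∀ p ∈ U, Dop (Dbarright w) p = 0 ∧ Dright (Dbarright w) p = 0 := by
  intro p hp
  have hpU : U ∈ nhds p := hU.mem_nhds hp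
  have hw2 : ContDiffAt ℝ 2 w p := hw.contDiffAt hpU
  have hf1 : ContDiffAt ℝ 1 (fderiv ℝ w) p := hw2.fderiv_right (by norm_num)
  have hdd : DifferentiableAt ℝ (fderiv ℝ w) p := hf1.differentiableAt (by norm_num)
  -- second derivative and symmetry
  have hsymm : ∀ v u : V3, fderiv ℝ (fderiv ℝ w) p v u = fderiv ℝ (fderiv ℝ w) p u v :=
    hw2.isSymmSndFDerivAt (by simp)
  -- second partials via the second derivative
  have hpd2 : ∀ m n : Fin 3, pd m (pd n w) p = fderiv ℝ (fderiv ℝ w) p (ev m) (ev n) := by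
    intro m n
    have h1 : pd n w = fun q => (ContinuousLinearMap.apply ℝ ℍ[ℝ] (ev n)) (fderiv ℝ w q) := rfl
    rw [h1, pd_comp_clm _ hdd m]
    rfl
  have hsym : ∀ m n : Fin 3, pd m (pd n w) p = pd n (pd m w) p := by
    intro m n; rw [hpd2, hpd2, hsymm]
  -- differentiability of the first partials
  have hdpd : ∀ n : Fin 3, DifferentiableAt ℝ (pd n w) p := by
    intro n
    exact ((ContinuousLinearMap.apply ℝ ℍ[ℝ] (ev n)).differentiable.differentiableAt).comp p hdd
  -- monogenicity relations for second partials
  have hE : ∀ m : Fin 3,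
      pd m (pd 0 w) p + qi * pd m (pd 1 w) p + qj * pd m (pd 2 w) p = 0 := by
    intro m
    have h0 : pd m (Dop w) p = 0 := by
      have heq : Dop w =ᶠ[nhds p] fun _ => (0 : ℍ[ℝ]) := by
        filter_upwards [hpU] with y hy using hmono y hy
      unfold pd
      rw [heq.fderiv_eq, fderiv_fun_const]
      rfl
    have hexp : Dop w =
        fun q => ((fun q => pd 0 w q + qi * pd 1 w q) q + (fun q => qj * pd 2 w q) q) := rfl
    rw [hexp, pd_add ((hdpd 0).fun_add ((hdpd 1).const_mul qi)) ((hdpd 2).const_mul qj) m,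
      pd_add (hdpd 0) ((hdpd 1).const_mul qi) m,
      pd_const_mul (hdpd 1) qi m, pd_const_mul (hdpd 2) qj m] at h0
    exact h0
  -- expansion of the partials of g = w D̄
  have hgm : ∀ m : Fin 3, pd m (Dbarright w) p =
      pd m (pd 0 w) p - pd m (pd 1 w) p * qi - pd m (pd 2 w) p * qj := by
    intro m
    have hexp : Dbarright w =
        fun q => ((fun q => pd 0 w q - pd 1 w q * qi) q - (fun q => pd 2 w q * qj) q) := rfl
    rw [hexp, pd_sub ((hdpd 0).fun_sub ((hdpd 1).mul_const qi)) ((hdpd 2).mul_const qj) m,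
      pd_sub (hdpd 0) ((hdpd 1).mul_const qi) m,
      pd_mul_const (hdpd 1) qi m, pd_mul_const (hdpd 2) qj m]
  have hlap : pd 0 (pd 0 w) p + pd 1 (pd 1 w) p + pd 2 (pd 2 w) p = 0 := hharm p hp
  constructor
  · show pd 0 (Dbarright w) p + qi * pd 1 (Dbarright w) p + qj * pd 2 (Dbarright w) p = 0
    rw [hgm 0, hgm 1, hgm 2, hsym 1 0, hsym 2 0, hsym 2 1]
    have hE0 := hE 0
    have hE1 := hE 1; rw [hsym 1 0] at hE1
    have hE2 := hE 2; rw [hsym 2 0, hsym 2 1] at hE2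
    have key : pd 0 (pd 0 w) p - pd 0 (pd 1 w) p * qi - pd 0 (pd 2 w) p * qj +
        qi * (pd 0 (pd 1 w) p - pd 1 (pd 1 w) p * qi - pd 1 (pd 2 w) p * qj) +
        qj * (pd 0 (pd 2 w) p - pd 1 (pd 2 w) p * qi - pd 2 (pd 2 w) p * qj) =
        (pd 0 (pd 0 w) p + qi * pd 0 (pd 1 w) p + qj * pd 0 (pd 2 w) p) -
        (pd 0 (pd 1 w) p + qi * pd 1 (pd 1 w) p + qj * pd 1 (pd 2 w) p) * qi -
        (pd 0 (pd 2 w) p + qi * pd 1 (pd 2 w) p + qj * pd 2 (pd 2 w) p) * qj := by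
      noncomm_ring
    rw [key, hE0, hE1, hE2]
    simp
  · show pd 0 (Dbarright w) p + pd 1 (Dbarright w) p * qi + pd 2 (Dbarright w) p * qj = 0
    rw [hgm 0, hgm 1, hgm 2, hsym 1 0, hsym 2 0, hsym 2 1]
    have key : pd 0 (pd 0 w) p - pd 0 (pd 1 w) p * qi - pd 0 (pd 2 w) p * qj +
        (pd 0 (pd 1 w) p - pd 1 (pd 1 w) p * qi - pd 1 (pd 2 w) p * qj) * qi +
        (pd 0 (pd 2 w) p - pd 1 (pd 2 w) p * qi - pd 2 (pd 2 w) p * qj) * qj =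
        (pd 0 (pd 0 w) p + pd 1 (pd 1 w) p + pd 2 (pd 2 w) p) +
        pd 1 (pd 1 w) p * (-(qi * qi) - 1) + pd 2 (pd 2 w) p * (-(qj * qj) - 1) -
        pd 1 (pd 2 w) p * (qj * qi + qi * qj) := by
      noncomm_ring
    rw [key, hlap, qi_mul_qi, qj_mul_qj, qij_anticomm]
    simp
end
end

section
/- Monogenic Blasius–Chaplygin force formula on a sphere: let B ⊆ ℝ³ be a closed ball with center c and radius r > 0 and let w = φ + ψ₁·i + ψ₂·j + ψ₃·k be continuously differentiable and left-monogenic (Dw = 0) on an open set containing B, where ψ₁ depends only on (x,y), ψ₂ only on (x,z), ψ₃ only on (y,z). Assume that at every point y of the sphere S = ∂B, the gradients ∇ψ₁(y), ∇ψ₂(y), ∇ψ₃(y) are each scalar multiples of the outward unit normal ν(y) = (y − c)/r. Then, with ν(y) viewed as a reduced quaternion, g = wD̄, and dS the surface measure on S: ∫_S |D(conj w)(y)|² ν(y) dS(y) = −∫_S [ Sc(g(y)·ν(y)·g(y)) + Sc(g(y)·ν(y)·g(y)·i)·i + Sc(g(y)·ν(y)·g(y)·j)·j ] dS(y). -/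
open Quaternion MeasureTheory Metric intervalIntegral

noncomputable section

/-- Surface integral over the sphere of center `c` and radius `r` in `ℝ³`, with respect to the
two-dimensional surface measure: the sphere is parametrized by `u ↦ c + r•u` over the unit
sphere (carrying the canonical surface measure `volume.toSphere`, of total mass `4π`), and the
surface measure scales by the factor `r²`. -/
noncomputable def sInt (c : V3) (r : ℝ) {E : Type*} [NormedAddCommGroup E] [NormedSpace ℝ E]
    (F : V3 → E) : E :=
  r ^ 2 • ∫ u : sphere (0 : V3) 1, F (c + r • (u : V3)) ∂((volume : Measure V3).toSphere)

def qmk (a b c d : ℝ) : ℍ[ℝ] := ⟨a, b, c, d⟩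

@[simp] lemma qmk_lit (a b c d : ℝ) : (⟨a, b, c, d⟩ : ℍ[ℝ]) = qmk a b c d := rfl

@[simp] lemma qmk_re (a b c d : ℝ) : (qmk a b c d).re = a := rfl

@[simp] lemma qmk_imI (a b c d : ℝ) : (qmk a b c d).imI = b := rfl

@[simp] lemma qmk_imJ (a b c d : ℝ) : (qmk a b c d).imJ = c := rfl

@[simp] lemma qmk_imK (a b c d : ℝ) : (qmk a b c d).imK = d := rfl

lemma pd_mk (f0 f1 f2 f3 : V3 → ℝ) (y : V3) (h0 : DifferentiableAt ℝ f0 y)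
    (h1 : DifferentiableAt ℝ f1 y) (h2 : DifferentiableAt ℝ f2 y)
    (h3 : DifferentiableAt ℝ f3 y) (m : Fin 3) :
    pd (E := ℍ[ℝ]) m (fun q => ⟨f0 q, f1 q, f2 q, f3 q⟩) y
      = ⟨pd m f0 y, pd m f1 y, pd m f2 y, pd m f3 y⟩ := by
  have hfe : (fun q => (⟨f0 q, f1 q, f2 q, f3 q⟩ : ℍ[ℝ]))
      = fun q => f0 q • qmk 1 0 0 0 + f1 q • qmk 0 1 0 0
          + f2 q • qmk 0 0 1 0 + f3 q • qmk 0 0 0 1 := by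
    funext q; ext <;> simp
  unfold pd
  rw [hfe, qmk_lit,
    fderiv_fun_add (((h0.smul_const _).fun_add (h1.smul_const _)).fun_add (h2.smul_const _)) (h3.smul_const _),
    fderiv_fun_add ((h0.smul_const _).fun_add (h1.smul_const _)) (h2.smul_const _),
    fderiv_fun_add (h0.smul_const _) (h1.smul_const _),
    fderiv_smul_const h0, fderiv_smul_const h1, fderiv_smul_const h2, fderiv_smul_const h3]
  simp only [ContinuousLinearMap.add_apply, ContinuousLinearMap.smulRight_apply]
  ext <;> simp [pd]

set_option maxHeartbeats 1000000 in
/-- Monogenic Blasius–Chaplygin force formula on a sphere: for a geometric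
flow potential `w = φ + ψ₁·i + ψ₂·j + ψ₃·k`, left-monogenic and continuously differentiable
on an open set containing the closed ball `B(c,r)`, whose stream-function gradients are
parallel to the outward unit normal `ν(y) = (y − c)/r` at every point of the sphere `S = ∂B`,
one has, with `g = wD̄`:
`∫_S |D(conj w)(y)|² ν(y) dS(y)
  = −∫_S [Sc(g·ν·g) + Sc(g·ν·g·i)·i + Sc(g·ν·g·j)·j] dS(y)`. -/
theorem monogenic_blasius_chaplygin_force
    (c : V3) (r : ℝ) (hr : 0 < r) (W : Set V3) (hW : IsOpen W)
    (hBW : closedBall c r ⊆ W) (φ ψ₁ ψ₂ ψ₃ : V3 → ℝ)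
    (hφ : ContDiffOn ℝ 1 φ W) (hψ₁ : ContDiffOn ℝ 1 ψ₁ W)
    (hψ₂ : ContDiffOn ℝ 1 ψ₂ W) (hψ₃ : ContDiffOn ℝ 1 ψ₃ W)
    (w : V3 → ℍ[ℝ]) (hw : ∀ q, w q = ⟨φ q, ψ₁ q, ψ₂ q, ψ₃ q⟩)
    (hmono : ∀ q ∈ W, Dop w q = 0)
    (hdep₁ : ∀ q ∈ W, pd 2 ψ₁ q = 0)
    (hdep₂ : ∀ q ∈ W, pd 1 ψ₂ q = 0)
    (hdep₃ : ∀ q ∈ W, pd 0 ψ₃ q = 0)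
    (hpar₁ : ∀ y ∈ sphere c r, ∃ t : ℝ, ∀ m : Fin 3, pd m ψ₁ y = t * (r⁻¹ • (y - c)) m)
    (hpar₂ : ∀ y ∈ sphere c r, ∃ t : ℝ, ∀ m : Fin 3, pd m ψ₂ y = t * (r⁻¹ • (y - c)) m)
    (hpar₃ : ∀ y ∈ sphere c r, ∃ t : ℝ, ∀ m : Fin 3, pd m ψ₃ y = t * (r⁻¹ • (y - c)) m) :
    sInt c r (fun y => ‖Dop (fun q => star (w q)) y‖ ^ 2 • toQ (r⁻¹ • (y - c)))
      = -sInt c r (fun y =>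
          ((Dbarright w y * toQ (r⁻¹ • (y - c)) * Dbarright w y).re : ℍ[ℝ])
            + (Dbarright w y * toQ (r⁻¹ • (y - c)) * Dbarright w y * qi).re • qi
            + (Dbarright w y * toQ (r⁻¹ • (y - c)) * Dbarright w y * qj).re • qj) := by
  have key : ∀ y ∈ sphere c r,
      (‖Dop (fun q => star (w q)) y‖ ^ 2 • toQ (r⁻¹ • (y - c)) : ℍ[ℝ])
        = -((((Dbarright w y * toQ (r⁻¹ • (y - c)) * Dbarright w y).re : ℝ) : ℍ[ℝ])
            + (Dbarright w y * toQ (r⁻¹ • (y - c)) * Dbarright w y * qi).re • qi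
            + (Dbarright w y * toQ (r⁻¹ • (y - c)) * Dbarright w y * qj).re • qj) := by
    intro y hy
    have hyW : y ∈ W := hBW (sphere_subset_closedBall hy)
    have hmem := hW.mem_nhds hyW
    have dφ : DifferentiableAt ℝ φ y := (hφ.differentiableOn one_ne_zero).differentiableAt hmem
    have dψ₁ : DifferentiableAt ℝ ψ₁ y := (hψ₁.differentiableOn one_ne_zero).differentiableAt hmem
    have dψ₂ : DifferentiableAt ℝ ψ₂ y := (hψ₂.differentiableOn one_ne_zero).differentiableAt hmem
    have dψ₃ : DifferentiableAt ℝ ψ₃ y := (hψ₃.differentiableOn one_ne_zero).differentiableAt hmem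
    have hwq : ∀ m, pd m w y = ⟨pd m φ y, pd m ψ₁ y, pd m ψ₂ y, pd m ψ₃ y⟩ := by
      intro m
      rw [show w = fun q => (⟨φ q, ψ₁ q, ψ₂ q, ψ₃ q⟩ : ℍ[ℝ]) from funext hw]
      exact pd_mk φ ψ₁ ψ₂ ψ₃ y dφ dψ₁ dψ₂ dψ₃ m
    have hswq : ∀ m, pd m (fun q => star (w q)) y
        = ⟨pd m φ y, -pd m ψ₁ y, -pd m ψ₂ y, -pd m ψ₃ y⟩ := by
      intro m
      have h1 : (fun q => star (w q)) = fun q => (⟨φ q, -ψ₁ q, -ψ₂ q, -ψ₃ q⟩ : ℍ[ℝ]) := by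
        funext q; rw [hw q]; ext <;> simp
      have h2 := pd_mk φ (fun q => -ψ₁ q) (fun q => -ψ₂ q) (fun q => -ψ₃ q) y dφ
        dψ₁.neg dψ₂.neg dψ₃.neg m
      have hneg : ∀ f : V3 → ℝ, pd m (fun q => -f q) y = -pd m f y := by
        intro f; simp [pd, fderiv_neg]
      rw [h1, h2, hneg ψ₁, hneg ψ₂, hneg ψ₃]
    obtain ⟨t₁, hp₁⟩ := hpar₁ y hy
    obtain ⟨t₂, hp₂⟩ := hpar₂ y hy
    obtain ⟨t₃, hp₃⟩ := hpar₃ y hy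
    have hd₁ := hdep₁ y hyW
    have hd₂ := hdep₂ y hyW
    have hd₃ := hdep₃ y hyW
    have hm := hmono y hyW
    rw [Dop, hwq 0, hwq 1, hwq 2] at hm
    simp only [qmk_lit] at hm
    rw [Quaternion.ext_iff] at hm
    simp only [qi, qj, qmk_lit, qmk_re, qmk_imI, qmk_imJ, qmk_imK, Quaternion.re_mul, Quaternion.imI_mul, Quaternion.imJ_mul,
      Quaternion.imK_mul, Quaternion.re_add, Quaternion.imI_add,
      Quaternion.imJ_add, Quaternion.imK_add, Quaternion.re_zero,
      Quaternion.imI_zero, Quaternion.imJ_zero, Quaternion.imK_zero] at hm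
    obtain ⟨hm0, hm1, hm2, hm3⟩ := hm
    have hφ0 : pd 0 φ y = t₁ * (r⁻¹ • (y - c)) 1 + t₂ * (r⁻¹ • (y - c)) 2 := by
      have e1 := hp₁ 1; have e2 := hp₂ 2; linarith
    have hφ1 : pd 1 φ y = -(t₁ * (r⁻¹ • (y - c)) 0) - t₃ * (r⁻¹ • (y - c)) 2 := by
      have e1 := hp₁ 0; have e2 := hp₃ 2; linarith
    have hφ2 : pd 2 φ y = -(t₂ * (r⁻¹ • (y - c)) 0) + t₃ * (r⁻¹ • (y - c)) 1 := by
      have e1 := hp₂ 0; have e2 := hp₃ 1; linarith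
    have e10 := hp₁ 0; have e11 := hp₁ 1
    have e20 := hp₂ 0; have e22 := hp₂ 2
    have e31 := hp₃ 1; have e32 := hp₃ 2
    have hA : Dop (fun q => star (w q)) y
        = ⟨2*(t₁*(r⁻¹ • (y - c)) 1 + t₂*(r⁻¹ • (y - c)) 2),
           -(2*(t₁*(r⁻¹ • (y - c)) 0 + t₃*(r⁻¹ • (y - c)) 2)),
           2*(t₃*(r⁻¹ • (y - c)) 1 - t₂*(r⁻¹ • (y - c)) 0), 0⟩ := by
      rw [Dop, hswq 0, hswq 1, hswq 2]
      simp only [qmk_lit]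
      rw [Quaternion.ext_iff]
      refine ⟨?_, ?_, ?_, ?_⟩ <;>
      · simp only [qi, qj, qmk_lit, qmk_re, qmk_imI, qmk_imJ, qmk_imK, Quaternion.re_mul, Quaternion.imI_mul, Quaternion.imJ_mul,
          Quaternion.imK_mul, Quaternion.re_add, Quaternion.imI_add,
          Quaternion.imJ_add, Quaternion.imK_add]
        simp only [hφ0, hφ1, hφ2, e10, e11, e20, e22, e31, e32, hd₁, hd₂, hd₃]
        ring
    have hg : Dbarright w y
        = ⟨2*(t₁*(r⁻¹ • (y - c)) 1 + t₂*(r⁻¹ • (y - c)) 2),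
           2*(t₁*(r⁻¹ • (y - c)) 0 + t₃*(r⁻¹ • (y - c)) 2),
           2*(t₂*(r⁻¹ • (y - c)) 0 - t₃*(r⁻¹ • (y - c)) 1), 0⟩ := by
      rw [Dbarright, hwq 0, hwq 1, hwq 2]
      simp only [qmk_lit]
      rw [Quaternion.ext_iff]
      refine ⟨?_, ?_, ?_, ?_⟩ <;>
      · simp only [qi, qj, qmk_lit, qmk_re, qmk_imI, qmk_imJ, qmk_imK, Quaternion.re_mul, Quaternion.imI_mul, Quaternion.imJ_mul,
          Quaternion.imK_mul, Quaternion.re_sub, Quaternion.imI_sub,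
          Quaternion.imJ_sub, Quaternion.imK_sub]
        simp only [hφ0, hφ1, hφ2, e10, e11, e20, e22, e31, e32, hd₁, hd₂, hd₃]
        ring
    have hnorm : ‖Dop (fun q => star (w q)) y‖ ^ 2
        = (2*(t₁*(r⁻¹ • (y - c)) 1 + t₂*(r⁻¹ • (y - c)) 2))^2
          + (2*(t₁*(r⁻¹ • (y - c)) 0 + t₃*(r⁻¹ • (y - c)) 2))^2
          + (2*(t₃*(r⁻¹ • (y - c)) 1 - t₂*(r⁻¹ • (y - c)) 0))^2 := by
      rw [sq, ← Quaternion.normSq_eq_norm_mul_self, hA]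
      simp only [qmk_lit]
      rw [Quaternion.normSq_def', qmk_re, qmk_imI, qmk_imJ, qmk_imK]
      ring
    have hNq : toQ (r⁻¹ • (y - c))
        = (⟨(r⁻¹ • (y - c)) 0, (r⁻¹ • (y - c)) 1, (r⁻¹ • (y - c)) 2, 0⟩ : ℍ[ℝ]) := rfl
    rw [hnorm, hNq, hg]
    simp only [qmk_lit]
    rw [Quaternion.ext_iff]
    refine ⟨?_, ?_, ?_, ?_⟩ <;>
    · simp only [qi, qj, qmk_lit, qmk_re, qmk_imI, qmk_imJ, qmk_imK, Quaternion.re_mul, Quaternion.imI_mul,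
        Quaternion.imJ_mul, Quaternion.imK_mul, Quaternion.re_add,
        Quaternion.imI_add, Quaternion.imJ_add, Quaternion.imK_add,
        Quaternion.re_neg, Quaternion.imI_neg, Quaternion.imJ_neg,
        Quaternion.imK_neg, Quaternion.re_smul, Quaternion.imI_smul,
        Quaternion.imJ_smul, Quaternion.imK_smul, Quaternion.re_coe,
        Quaternion.imI_coe, Quaternion.imJ_coe, Quaternion.imK_coe,
        smul_eq_mul]
      ring
  have hmem : ∀ u : sphere (0 : V3) 1, c + r • (u : V3) ∈ sphere c r := by
    intro u
    have hu : ‖(u : V3)‖ = 1 := by simpa using mem_sphere_zero_iff_norm.mp u.2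
    simp [mem_sphere_iff_norm, norm_smul, hu, abs_of_pos hr]
  rw [sInt, sInt, ← smul_neg, ← MeasureTheory.integral_neg]
  congr 1
  exact integral_congr_ae (Filter.Eventually.of_forall fun u => key _ (hmem u))
end
end
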